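/- Let P be a Borel probability measure on ℝ satisfying the compatibility condition ∫ x e^{−x²/2} dP(x) = 0. Then for every y ∈ ℝ, ∫ e^{x·y − x²/2} dP(x) ≥ ∫ e^{−x²/2} dP(x). Consequently, writing ρ₀ = ∫ e^{−x²/2} dP(x) > 0 and the weighted hyperbolic secant sech_w(y) = ρ₀ / ∫ e^{x·y − x²/2} dP(x), one has sech_w(y) ∈ (0, 1] for every y, so sech_w(y) is a valid conditional probability. -/
import Mathlib


open MeasureTheory Real

lemma aux_int1 (P : Measure ℝ) [IsProbabilityMeasure P] :
    Integrable (fun x : ℝ => Real.exp (-(x ^ 2) / 2)) P := by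
  refine (integrable_const (1 : ℝ)).mono' ?_ ?_
  · exact (Real.continuous_exp.comp (by continuity)).aestronglyMeasurable
  · filter_upwards with x
    rw [Real.norm_eq_abs, abs_of_pos (Real.exp_pos _)]
    exact Real.exp_le_one_iff.mpr (by nlinarith [sq_nonneg x])

lemma aux_int2 (P : Measure ℝ) [IsProbabilityMeasure P] :
    Integrable (fun x : ℝ => x * Real.exp (-(x ^ 2) / 2)) P := by
  refine (integrable_const (1 : ℝ)).mono' ?_ ?_
  · exact (continuous_id.mul (Real.continuous_exp.comp (by continuity))).aestronglyMeasurable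
  · filter_upwards with x
    rw [Real.norm_eq_abs, abs_mul, abs_of_pos (Real.exp_pos _)]
    have h1 : |x| ≤ Real.exp (x ^ 2 / 2) := by
      have h2 : x ^ 2 / 2 + 1 ≤ Real.exp (x ^ 2 / 2) := Real.add_one_le_exp _
      nlinarith [sq_nonneg (|x| - 1), sq_abs x]
    calc |x| * Real.exp (-(x ^ 2) / 2)
        ≤ Real.exp (x ^ 2 / 2) * Real.exp (-(x ^ 2) / 2) := by
          exact mul_le_mul_of_nonneg_right h1 (Real.exp_pos _).le
      _ = 1 := by rw [← Real.exp_add]; ring_nf; exact Real.exp_zero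

lemma aux_int3 (P : Measure ℝ) [IsProbabilityMeasure P] (y : ℝ) :
    Integrable (fun x : ℝ => Real.exp (x * y - x ^ 2 / 2)) P := by
  refine (integrable_const (Real.exp (y ^ 2 / 2))).mono' ?_ ?_
  · exact (Real.continuous_exp.comp (by continuity)).aestronglyMeasurable
  · filter_upwards with x
    rw [Real.norm_eq_abs, abs_of_pos (Real.exp_pos _)]
    exact Real.exp_le_exp.mpr (by nlinarith [sq_nonneg (x - y)])

/-- if `P` satisfies the compatibility condition `∫ x e^{-x²/2} dP(x) = 0`,
then `∫ e^{x y - x²/2} dP(x) ≥ ρ₀ := ∫ e^{-x²/2} dP(x)` for every `y`, `ρ₀ > 0`, and the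
weighted hyperbolic secant `sech_w(y) = ρ₀ / ∫ e^{x y - x²/2} dP(x)` lies in `(0, 1]`. -/
theorem stmt14 (P : Measure ℝ) [IsProbabilityMeasure P]
    (hcompat : (∫ x, x * Real.exp (-(x ^ 2) / 2) ∂P) = 0)
    (ρ₀ : ℝ) (hρ₀ : ρ₀ = ∫ x, Real.exp (-(x ^ 2) / 2) ∂P)
    (sechW : ℝ → ℝ) (hsechW : ∀ y, sechW y = ρ₀ / ∫ x, Real.exp (x * y - x ^ 2 / 2) ∂P) :
    (∀ y : ℝ, ρ₀ ≤ ∫ x, Real.exp (x * y - x ^ 2 / 2) ∂P) ∧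
    0 < ρ₀ ∧
    (∀ y : ℝ, sechW y ∈ Set.Ioc (0 : ℝ) 1) := by
  have hmain : ∀ y : ℝ, ρ₀ ≤ ∫ x, Real.exp (x * y - x ^ 2 / 2) ∂P := by
    intro y
    have hlow : Integrable (fun x : ℝ =>
        Real.exp (-(x ^ 2) / 2) + y * (x * Real.exp (-(x ^ 2) / 2))) P :=
      (aux_int1 P).add ((aux_int2 P).const_mul y)
    have hle : ∫ x, (Real.exp (-(x ^ 2) / 2) + y * (x * Real.exp (-(x ^ 2) / 2))) ∂P
        ≤ ∫ x, Real.exp (x * y - x ^ 2 / 2) ∂P := by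
      refine integral_mono hlow (aux_int3 P y) ?_
      intro x
      have h1 : x * y + 1 ≤ Real.exp (x * y) := Real.add_one_le_exp _
      have h2 : Real.exp (x * y - x ^ 2 / 2)
          = Real.exp (x * y) * Real.exp (-(x ^ 2) / 2) := by
        rw [← Real.exp_add]; ring_nf
      dsimp only
      rw [h2]
      have h3 : (x * y + 1) * Real.exp (-(x ^ 2) / 2)
          ≤ Real.exp (x * y) * Real.exp (-(x ^ 2) / 2) :=
        mul_le_mul_of_nonneg_right h1 (Real.exp_pos _).le
      calc Real.exp (-(x ^ 2) / 2) + y * (x * Real.exp (-(x ^ 2) / 2))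
          = (x * y + 1) * Real.exp (-(x ^ 2) / 2) := by ring
        _ ≤ _ := h3
    have heq : ∫ x, (Real.exp (-(x ^ 2) / 2) + y * (x * Real.exp (-(x ^ 2) / 2))) ∂P
        = ρ₀ + y * (∫ x, x * Real.exp (-(x ^ 2) / 2) ∂P) := by
      rw [integral_add (aux_int1 P) ((aux_int2 P).const_mul y),
        integral_const_mul, hρ₀]
    rw [heq, hcompat, mul_zero, add_zero] at hle
    exact hle
  have hpos : 0 < ρ₀ := by
    rw [hρ₀]
    refine (integral_pos_iff_support_of_nonneg (fun x => (Real.exp_pos _).le)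
      (aux_int1 P)).mpr ?_
    have : Function.support (fun x : ℝ => Real.exp (-(x ^ 2) / 2)) = Set.univ := by
      ext x; simp [Function.mem_support, (Real.exp_pos _).ne']
    rw [this]
    simp
  refine ⟨hmain, hpos, fun y => ?_⟩
  have hy := hmain y
  have hden : 0 < ∫ x, Real.exp (x * y - x ^ 2 / 2) ∂P := lt_of_lt_of_le hpos hy
  rw [hsechW y]
  constructor
  · exact div_pos hpos hden
  · exact (div_le_one hden).mpr hy
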